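/- Let l : ℝ → ℝ be differentiable with l(t) > 0, l'(t) < 0, and l'(t)/l(t) ≥ −3/(4t) for all t > 0. Then for every x ∈ ℝⁿ \ {0}, every eigenvalue of the linear map A = l(|x|)·Id + (l'(|x|)/|x|)·(x ⊗ xᵀ) lies in the interval [l(|x|)/4, l(|x|)]; in particular the operator norm of A is at most l(|x|), A is invertible, and det(A) ≥ l(|x|)ⁿ/4. -/

import Mathlib

set_option maxHeartbeats 1000000 in
theorem stmt_2 (n : ℕ) (l : ℝ → ℝ) (hl : Differentiable ℝ l)
    (hpos : ∀ t > (0:ℝ), 0 < l t)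
    (hneg : ∀ t > (0:ℝ), deriv l t < 0)
    (hratio : ∀ t > (0:ℝ), deriv l t / l t ≥ -(3 / (4 * t)))
    (x : EuclideanSpace ℝ (Fin n)) (hx : x ≠ 0) :
    let A : EuclideanSpace ℝ (Fin n) →L[ℝ] EuclideanSpace ℝ (Fin n) :=
      l ‖x‖ • ContinuousLinearMap.id ℝ _ +
        (deriv l ‖x‖ / ‖x‖) • ((innerSL ℝ x).smulRight x)
    (∀ μ : ℝ, Module.End.HasEigenvalue (A.toLinearMap) μ →
        μ ∈ Set.Icc (l ‖x‖ / 4) (l ‖x‖)) ∧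
    ‖A‖ ≤ l ‖x‖ ∧
    Function.Bijective A ∧
    LinearMap.det A.toLinearMap ≥ l ‖x‖ ^ n / 4 := by
  intro A
  have hr0 : (0:ℝ) < ‖x‖ := norm_pos_iff.mpr hx
  set r : ℝ := ‖x‖ with hrdef
  set a : ℝ := l r with hadef
  set b : ℝ := deriv l r / r with hbdef
  have ha : 0 < a := hpos r hr0
  have hd : deriv l r < 0 := hneg r hr0
  have hb : b < 0 := div_neg_of_neg_of_pos hd hr0
  have hbr : b * r ^ 2 = deriv l r * r := by
    rw [hbdef]; field_simp
  have hd2 : -(3 / (4 * r)) * a ≤ deriv l r := (le_div_iff₀ ha).mp (hratio r hr0)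
  have key : a / 4 ≤ a + b * r ^ 2 := by
    rw [hbr]
    have h3 : -(3 / (4 * r)) * a * r = -(3/4) * a := by field_simp
    nlinarith [mul_le_mul_of_nonneg_right hd2 (le_of_lt hr0)]
  have hA : ∀ v, A v = a • v + (b * (inner ℝ x v : ℝ)) • x := by
    intro v
    simp [A, ContinuousLinearMap.smulRight_apply, mul_smul]
    rfl
  -- eigenvalues
  have heig : ∀ μ : ℝ, Module.End.HasEigenvalue (A.toLinearMap) μ →
      μ ∈ Set.Icc (a / 4) a := by
    intro μ hμ
    obtain ⟨v, hv⟩ := hμ.exists_hasEigenvector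
    have hv0 : (0:ℝ) < ‖v‖ ^ 2 := by
      have := norm_pos_iff.mpr hv.2
      positivity
    have hAv : A v = μ • v := hv.apply_eq_smul
    have h1 : a * ‖v‖ ^ 2 + b * (inner ℝ x v : ℝ) ^ 2 = μ * ‖v‖ ^ 2 := by
      have h2 := congrArg (fun w : EuclideanSpace ℝ (Fin n) => (inner ℝ w v : ℝ)) hAv
      simp only [hA v] at h2
      simp only [inner_add_left, real_inner_smul_left, real_inner_self_eq_norm_sq,
        real_inner_comm x v] at h2
      linear_combination h2
    have hcs : (inner ℝ x v : ℝ) ^ 2 ≤ r ^ 2 * ‖v‖ ^ 2 := by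
      have h4 := abs_real_inner_le_norm x v
      nlinarith [sq_abs (inner ℝ x v : ℝ), abs_nonneg (inner ℝ x v : ℝ)]
    constructor
    · nlinarith
    · nlinarith [sq_nonneg (inner ℝ x v : ℝ)]
  -- operator norm
  have hnorm : ‖A‖ ≤ a := by
    refine A.opNorm_le_bound (le_of_lt ha) fun v => ?_
    have hsq : ‖A v‖ ^ 2 ≤ (a * ‖v‖) ^ 2 := by
      have he : ‖A v‖ ^ 2 = a^2*‖v‖^2 + 2*a*b*(inner ℝ x v : ℝ)^2
          + b^2*(inner ℝ x v : ℝ)^2*r^2 := by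
        rw [hA v, @norm_add_sq_real, real_inner_smul_left, real_inner_smul_right,
          norm_smul, norm_smul, real_inner_comm v x]
        simp only [Real.norm_eq_abs, mul_pow, sq_abs]
        ring
      have h8 : 0 ≤ 2*a + b*r^2 := by linarith
      have h9 : b * (2*a + b*r^2) ≤ 0 := mul_nonpos_of_nonpos_of_nonneg hb.le h8
      have h10 : (inner ℝ x v : ℝ)^2 * (b*(2*a + b*r^2)) ≤ 0 :=
        mul_nonpos_of_nonneg_of_nonpos (sq_nonneg _) h9
      nlinarith [h10]
    have h5 := Real.sqrt_le_sqrt hsq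
    rwa [Real.sqrt_sq (norm_nonneg _), Real.sqrt_sq (by positivity)] at h5
  -- n = m + 1
  obtain ⟨m, rfl⟩ : ∃ m, n = m + 1 := by
    cases n with
    | zero => exact absurd (Subsingleton.elim x 0) hx
    | succ m => exact ⟨m, rfl⟩
  -- determinant
  have hx2 : ∑ i, x i * x i = r ^ 2 := by
    rw [hrdef, ← real_inner_self_eq_norm_sq, PiLp.inner_apply]
    simp [sq]
  have hdet : LinearMap.det A.toLinearMap = a ^ m * (a + b * r ^ 2) := by
    have hM : LinearMap.toMatrix (EuclideanSpace.basisFun (Fin (m+1)) ℝ).toBasis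
        (EuclideanSpace.basisFun (Fin (m+1)) ℝ).toBasis A.toLinearMap
        = a • (1 + Matrix.replicateCol Unit (fun i => b / a * x i) * Matrix.replicateRow Unit (fun j => x j)) := by
      ext i j
      simp [LinearMap.toMatrix_apply, hA, Matrix.mul_apply, Matrix.one_apply,
        PiLp.inner_apply, RCLike.inner_apply, EuclideanSpace.basisFun_apply]
      rcases eq_or_ne i j with h | h <;> simp [h] <;> field_simp <;> ring
    have hxx : ∑ i, x i * (b / a * x i) = b / a * r ^ 2 := by
      rw [show ∑ i, x i * (b / a * x i) = ∑ i, b / a * (x i * x i) from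
        Finset.sum_congr rfl fun i _ => by ring, ← Finset.mul_sum, hx2]
    rw [← LinearMap.det_toMatrix (EuclideanSpace.basisFun (Fin (m+1)) ℝ).toBasis, hM,
      Matrix.det_smul, Matrix.det_one_add_replicateCol_mul_replicateRow]
    simp only [dotProduct, Fintype.card_fin, hxx]
    field_simp
    ring
  have hne : LinearMap.det A.toLinearMap ≠ 0 := by
    rw [hdet]
    have : 0 < a + b * r ^ 2 := lt_of_lt_of_le (by linarith) key
    positivity
  have hbij : Function.Bijective A := by
    have h := (A.toLinearMap.equivOfDetNeZero hne).bijective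
    have h2 : ((A.toLinearMap.equivOfDetNeZero hne : _ ≃ₗ[ℝ] _) :
        EuclideanSpace ℝ (Fin (m+1)) →ₗ[ℝ] EuclideanSpace ℝ (Fin (m+1))) = A.toLinearMap :=
      LinearEquiv.coe_ofIsUnitDet _
    have h3 : ⇑(A.toLinearMap.equivOfDetNeZero hne) = ⇑A := by
      funext y
      have h4 := DFunLike.congr_fun h2 y
      simpa using h4
    rwa [h3] at h
  refine ⟨heig, hnorm, hbij, ?_⟩
  rw [hdet]
  have h6 : a ^ (m+1) / 4 = a ^ m * (a / 4) := by ring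
  rw [ge_iff_le, h6]
  exact mul_le_mul_of_nonneg_left key (by positivity)
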